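/- Let f ∈ ℝ[x₁,…,xₙ] be irreducible and suppose V = f⁻¹(0) ⊂ ℝⁿ contains a point where ∇f ≠ 0. Then every polynomial g ∈ ℝ[x₁,…,xₙ] that vanishes identically on V is a polynomial multiple of f. -/

import Mathlib

set_option maxHeartbeats 1000000
set_option synthInstance.maxHeartbeats 400000
open MvPolynomial


lemma finSuccEquiv_pderiv_zero {R : Type*} [CommRing R] (m : ℕ)
    (f : MvPolynomial (Fin (m+1)) R) :
    finSuccEquiv R m (pderiv 0 f) = Polynomial.derivative (finSuccEquiv R m f) := by
  induction f using MvPolynomial.induction_on with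
  | C a => simp [finSuccEquiv_apply]
  | add p q hp hq => simp [map_add, hp, hq]
  | mul_X p i hp =>
    refine Fin.cases ?_ ?_ i
    · rw [pderiv_mul, map_add, map_mul, map_mul, hp]
      simp only [finSuccEquiv_X_zero, pderiv_X_self, map_one, mul_one, map_mul,
        Polynomial.derivative_mul, Polynomial.derivative_X]
    · intro j
      rw [pderiv_mul, map_add, map_mul, map_mul, hp]
      simp [finSuccEquiv_X_succ, pderiv_X_of_ne (Fin.succ_ne_zero j), Polynomial.derivative_mul]


lemma mv_eq_zero_of_eval_zero_pi : ∀ (m : ℕ) (S : Fin m → Set ℝ), (∀ i, (S i).Infinite) →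
    ∀ (d : MvPolynomial (Fin m) ℝ), (∀ y : Fin m → ℝ, (∀ i, y i ∈ S i) → eval y d = 0) → d = 0 := by
  intro m
  induction m with
  | zero =>
    intro S hS d h
    have := h finZeroElim (fun i => i.elim0)
    rw [eq_C_of_isEmpty d] at this ⊢
    simpa using this
  | succ m ih =>
    intro S hS d h
    set F := finSuccEquiv ℝ m d with hF
    have hcoeff : ∀ k, F.coeff k = 0 := by
      intro k
      refine ih (fun i => S i.succ) (fun i => hS i.succ) _ (fun z hz => ?_)
      have hp : (F.map (eval z)) = 0 := by
        refine Polynomial.eq_zero_of_infinite_isRoot _ ((hS 0).mono ?_)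
        intro t ht
        have h2 : eval (Fin.cons t z : Fin (m+1) → ℝ) d = 0 := by
          refine h _ (fun i => ?_)
          refine Fin.cases ?_ ?_ i
          · simpa using ht
          · intro j; simpa using hz j
        rw [eval_eq_eval_mv_eval'] at h2
        exact h2
      have := congrArg (fun p => Polynomial.coeff p k) hp
      simpa [Polynomial.coeff_map] using this
    have hF0 : F = 0 := Polynomial.ext fun k => by simp [hcoeff k]
    have := congrArg (finSuccEquiv ℝ m).symm hF0
    simpa [hF] using this


lemma exists_sign_change {h : ℝ → ℝ} {t₀ D : ℝ} (hD : D ≠ 0) (h0 : h t₀ = 0)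
    (hder : HasDerivAt h D t₀) : ∃ t₁ t₂ : ℝ, t₁ < t₂ ∧ h t₁ * h t₂ < 0 := by
  rw [hasDerivAt_iff_tendsto_slope] at hder
  have hev : ∀ᶠ t in nhdsWithin t₀ {t₀}ᶜ, |slope h t₀ t - D| < |D| := by
    have := hder (Metric.ball_mem_nhds D (abs_pos.mpr hD))
    filter_upwards [this] with t ht
    simpa [Real.dist_eq] using ht
  rw [eventually_nhdsWithin_iff] at hev
  obtain ⟨ε, εpos, hε⟩ := Metric.eventually_nhds_iff.mp hev
  have hne1 : t₀ - ε/2 ≠ t₀ := by intro hh; have := congrArg (fun z => z - t₀) hh; simp at this; linarith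
  have hne2 : t₀ + ε/2 ≠ t₀ := by intro hh; have := congrArg (fun z => z - t₀) hh; simp at this; linarith
  have hd1 : dist (t₀ - ε/2) t₀ < ε := by rw [Real.dist_eq, abs_of_nonpos (by linarith)]; linarith
  have hd2 : dist (t₀ + ε/2) t₀ < ε := by rw [Real.dist_eq, abs_of_nonneg (by linarith)]; linarith
  have hs1 := hε hd1 hne1
  have hs2 := hε hd2 hne2
  set s₁ := slope h t₀ (t₀ - ε/2) with hS1
  set s₂ := slope h t₀ (t₀ + ε/2) with hS2
  have key : ∀ s : ℝ, |s - D| < |D| → 0 < s * D := by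
    intro s hs
    have h1 := abs_lt.mp hs
    rcases hD.lt_or_gt with hD' | hD'
    · rw [abs_of_neg hD'] at h1; nlinarith
    · rw [abs_of_pos hD'] at h1; nlinarith
  have hk1 := key _ hs1
  have hk2 := key _ hs2
  have hD2 : (0:ℝ) < D^2 := by positivity
  have hss : 0 < s₁ * s₂ := by nlinarith [mul_pos hk1 hk2, hD2]
  have he1 : h (t₀ - ε/2) = s₁ * ((t₀ - ε/2) - t₀) := by
    rw [hS1, slope_def_field, h0, sub_zero, div_mul_cancel₀ _ (sub_ne_zero.mpr hne1)]
  have he2 : h (t₀ + ε/2) = s₂ * ((t₀ + ε/2) - t₀) := by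
    rw [hS2, slope_def_field, h0, sub_zero, div_mul_cancel₀ _ (sub_ne_zero.mpr hne2)]
  refine ⟨t₀ - ε/2, t₀ + ε/2, by linarith, ?_⟩
  rw [he1, he2]
  have e1 : (t₀ - ε/2) - t₀ = -(ε/2) := by ring
  have e2 : (t₀ + ε/2) - t₀ = ε/2 := by ring
  rw [e1, e2]
  have hε2 : (0:ℝ) < ε/2 := by linarith
  nlinarith [mul_pos hss (mul_pos hε2 hε2)]

noncomputable section
abbrev Rm (m : ℕ) := MvPolynomial (Fin m) ℝ
abbrev Km (m : ℕ) := FractionRing (Rm m)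

lemma smul_eq_C_mul' {m : ℕ} (c : Rm m) (p : Polynomial (Km m)) :
    c • p = Polynomial.C (algebraMap (Rm m) (Km m) c) * p := by
  rw [algebra_compatible_smul (Km m), Polynomial.smul_eq_C_mul]

lemma bezout_RX (m : ℕ) (f g : MvPolynomial (Fin (m+1)) ℝ)
    (hirr : Irreducible f) (hdeg : (finSuccEquiv ℝ m f).natDegree ≠ 0) (hndvd : ¬ f ∣ g) :
    ∃ (A B : Polynomial (Rm m)) (c : Rm m), c ≠ 0 ∧
      A * finSuccEquiv ℝ m f + B * finSuccEquiv ℝ m g = Polynomial.C c := by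
  letI : NormalizationMonoid (Rm m) := UniqueFactorizationMonoid.strongNormalizationMonoid.toNormalizationMonoid
  letI : NormalizedGCDMonoid (Rm m) := UniqueFactorizationMonoid.toNormalizedGCDMonoid (Rm m)
  set F := finSuccEquiv ℝ m f with hFdef
  set G := finSuccEquiv ℝ m g with hGdef
  have hFirr : Irreducible F := by
    rw [hFdef]
    exact (MulEquiv.irreducible_iff (finSuccEquiv ℝ m).toRingEquiv.toMulEquiv).mpr hirr
  have hFprim : F.IsPrimitive := by
    intro r hr
    obtain ⟨h, hh⟩ := hr
    rcases hFirr.isUnit_or_isUnit hh with hu | hu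
    · exact Polynomial.isUnit_C.mp hu
    · exfalso
      obtain ⟨u, hu', rfl⟩ := Polynomial.isUnit_iff.mp hu
      apply hdeg
      rw [hh, ← Polynomial.C_mul, Polynomial.natDegree_C]
  have hinj : Function.Injective (Polynomial.mapRingHom (algebraMap (Rm m) (Km m))) :=
    Polynomial.map_injective _ (IsFractionRing.injective (Rm m) (Km m))
  set FK := F.map (algebraMap (Rm m) (Km m)) with hFK
  set GK := G.map (algebraMap (Rm m) (Km m)) with hGK
  have hFKirr : Irreducible FK :=
    (hFprim.irreducible_iff_irreducible_map_fraction_map).mp hFirr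
  have hnd : ¬ FK ∣ GK := by
    rintro ⟨H, hH⟩
    obtain ⟨c, hc⟩ := IsLocalization.integerNormalization_map_to_map
      (nonZeroDivisors (Rm m)) H
    have heq : F * IsLocalization.integerNormalization (nonZeroDivisors (Rm m)) H
        = Polynomial.C (c : Rm m) * G := by
      apply hinj
      simp only [map_mul, Polynomial.coe_mapRingHom, hc, Polynomial.map_C]
      rw [smul_eq_C_mul', ← hFK, ← hGK, hH]
      ring
    have hFprime : Prime F := UniqueFactorizationMonoid.irreducible_iff_prime.mp hFirr
    rcases (hFprime.2.2 _ _ ⟨_, heq.symm⟩) with hd | hd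
    · have hc0 : (c : Rm m) ≠ 0 := nonZeroDivisors.coe_ne_zero c
      have := Polynomial.natDegree_le_of_dvd hd (by simpa using hc0)
      simp [Polynomial.natDegree_C] at this
      exact hdeg this
    · exact hndvd ((map_dvd_iff (f := (finSuccEquiv ℝ m).toRingEquiv.toMulEquiv)
        (a := f) (b := g)).mp (by exact hd))
  have hcop : IsCoprime FK GK := (hFKirr.coprime_iff_not_dvd).mpr hnd
  obtain ⟨a, b, hab⟩ := hcop
  obtain ⟨c₁, hc₁⟩ := IsLocalization.integerNormalization_map_to_map (nonZeroDivisors (Rm m)) a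
  obtain ⟨c₂, hc₂⟩ := IsLocalization.integerNormalization_map_to_map (nonZeroDivisors (Rm m)) b
  refine ⟨Polynomial.C (c₂ : Rm m) * IsLocalization.integerNormalization (nonZeroDivisors (Rm m)) a,
    Polynomial.C (c₁ : Rm m) * IsLocalization.integerNormalization (nonZeroDivisors (Rm m)) b,
    (c₁ : Rm m) * (c₂ : Rm m),
    mul_ne_zero (nonZeroDivisors.coe_ne_zero c₁) (nonZeroDivisors.coe_ne_zero c₂), ?_⟩
  apply hinj
  simp only [map_add, map_mul, Polynomial.coe_mapRingHom, Polynomial.map_C, hc₁, hc₂]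
  rw [smul_eq_C_mul', smul_eq_C_mul', ← hFK, ← hGK]
  linear_combination (Polynomial.C (algebraMap (Rm m) (Km m) (c₁ : Rm m)) *
    Polynomial.C (algebraMap (Rm m) (Km m) (c₂ : Rm m))) * hab
lemma key_lemma (m : ℕ) (f : MvPolynomial (Fin (m+1)) ℝ) (hirr : Irreducible f)
    (x₀ : Fin (m+1) → ℝ) (hf0 : eval x₀ f = 0) (hd : eval x₀ (pderiv 0 f) ≠ 0)
    (g : MvPolynomial (Fin (m+1)) ℝ)
    (hg : ∀ x : Fin (m+1) → ℝ, eval x f = 0 → eval x g = 0) : f ∣ g := by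
  by_contra hndvd
  have hdeg : (finSuccEquiv ℝ m f).natDegree ≠ 0 := by
    intro h0
    obtain ⟨r, hr⟩ := Polynomial.natDegree_eq_zero.mp h0
    have hpd : finSuccEquiv ℝ m (pderiv 0 f) = 0 := by
      rw [finSuccEquiv_pderiv_zero, ← hr, Polynomial.derivative_C]
    have : pderiv 0 f = 0 := by
      have := congrArg (finSuccEquiv ℝ m).symm hpd
      simpa using this
    rw [this] at hd
    simp at hd
  obtain ⟨A, B, c, hc0, hbez⟩ := bezout_RX m f g hirr hdeg hndvd
  set t₀ := x₀ 0 with ht₀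
  set y₀ := Fin.tail x₀ with hy₀
  have hx₀ : (Fin.cons t₀ y₀ : Fin (m+1) → ℝ) = x₀ := Fin.cons_self_tail x₀
  set q : Polynomial ℝ := (finSuccEquiv ℝ m f).map (eval y₀) with hqdef
  have hq0 : q.eval t₀ = 0 := by
    rw [hqdef, ← eval_eq_eval_mv_eval', hx₀, hf0]
  have hD : q.derivative.eval t₀ = eval x₀ (pderiv 0 f) := by
    rw [hqdef, Polynomial.derivative_map, ← finSuccEquiv_pderiv_zero,
      ← eval_eq_eval_mv_eval', hx₀]
  have hder : HasDerivAt (fun t => q.eval t) (q.derivative.eval t₀) t₀ := q.hasDerivAt t₀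
  obtain ⟨t₁, t₂, hlt, hsign⟩ := exists_sign_change (hD.symm ▸ hd) hq0 hder
  have hconsC : ∀ t : ℝ, Continuous (fun y : Fin m → ℝ => (Fin.cons t y : Fin (m+1) → ℝ)) := by
    intro t
    apply continuous_pi
    intro i
    refine Fin.cases ?_ ?_ i
    · simpa using continuous_const
    · intro j; simpa using continuous_apply j
  set c₁ : (Fin m → ℝ) → ℝ := fun y => eval (Fin.cons t₁ y) f with hc₁def
  set c₂ : (Fin m → ℝ) → ℝ := fun y => eval (Fin.cons t₂ y) f with hc₂def
  have hc₁cont : Continuous c₁ := (MvPolynomial.continuous_eval f).comp (hconsC t₁)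
  have hc₂cont : Continuous c₂ := (MvPolynomial.continuous_eval f).comp (hconsC t₂)
  have hUopen : IsOpen {y : Fin m → ℝ | c₁ y * c₂ y < 0} :=
    isOpen_lt (hc₁cont.mul hc₂cont) continuous_const
  have hy₀U : y₀ ∈ {y : Fin m → ℝ | c₁ y * c₂ y < 0} := by
    have e1 : c₁ y₀ = q.eval t₁ := (eval_eq_eval_mv_eval' y₀ t₁ f).symm ▸ rfl
    have e2 : c₂ y₀ = q.eval t₂ := (eval_eq_eval_mv_eval' y₀ t₂ f).symm ▸ rfl
    simp only [Set.mem_setOf_eq]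
    rw [hc₁def, hc₂def]
    simp only []
    rw [eval_eq_eval_mv_eval', eval_eq_eval_mv_eval', ← hqdef]
    exact hsign
  obtain ⟨ε, εpos, hball⟩ := Metric.isOpen_iff.mp hUopen y₀ hy₀U
  have hvanish : ∀ y : Fin m → ℝ, (∀ i, y i ∈ Set.Ioo (y₀ i - ε/2) (y₀ i + ε/2)) →
      eval y c = 0 := by
    intro y hy
    have hyU : y ∈ {y : Fin m → ℝ | c₁ y * c₂ y < 0} := by
      apply hball
      rw [Metric.mem_ball, dist_pi_lt_iff εpos]
      intro i
      rw [Real.dist_eq, abs_lt]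
      constructor <;> [linarith [(hy i).1, (hy i).2]; linarith [(hy i).1, (hy i).2]]
    have hcont : Continuous (fun t => eval (Fin.cons t y : Fin (m+1) → ℝ) f) := by
      have hfe : (fun t : ℝ => eval (Fin.cons t y : Fin (m+1) → ℝ) f)
          = fun t => Polynomial.eval t ((finSuccEquiv ℝ m f).map (eval y)) :=
        funext fun t => by rw [eval_eq_eval_mv_eval']
      rw [hfe]
      exact Polynomial.continuous _
    have hyU' : c₁ y * c₂ y < 0 := hyU
    have hroot : ∃ t, eval (Fin.cons t y : Fin (m+1) → ℝ) f = 0 := by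
      rcases mul_neg_iff.mp hyU' with ⟨h1, h2⟩ | ⟨h1, h2⟩
      · obtain ⟨t, _, h0⟩ := intermediate_value_Icc' hlt.le hcont.continuousOn
          (Set.mem_Icc.mpr ⟨h2.le, h1.le⟩)
        exact ⟨t, h0⟩
      · obtain ⟨t, _, h0⟩ := intermediate_value_Icc hlt.le hcont.continuousOn
          (Set.mem_Icc.mpr ⟨h1.le, h2.le⟩)
        exact ⟨t, h0⟩
    obtain ⟨t, hroot⟩ := hroot
    have hgz : eval (Fin.cons t y : Fin (m+1) → ℝ) g = 0 := hg _ hroot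
    have hev := congrArg (fun p : Polynomial (MvPolynomial (Fin m) ℝ) =>
      Polynomial.eval t (p.map (eval y))) hbez
    simp only [Polynomial.map_add, Polynomial.map_mul, Polynomial.eval_add,
      Polynomial.eval_mul, Polynomial.map_C, Polynomial.eval_C,
      ← eval_eq_eval_mv_eval'] at hev
    rw [hroot, hgz] at hev
    simpa using hev.symm
  exact hc0 (mv_eq_zero_of_eval_zero_pi m _
    (fun i => Set.Ioo_infinite (by linarith)) c hvanish)

/-- real Nullstellensatz for an irreducible polynomial with a regular
zero: if `f ∈ ℝ[x₁,…,xₙ]` is irreducible and its real zero set contains a point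
where some partial derivative is nonzero, then every polynomial `g` vanishing on the
real zero set of `f` is a polynomial multiple of `f`. -/
theorem real_nullstellensatz_irreducible_regular (n : ℕ)
    (f : MvPolynomial (Fin n) ℝ) (hirr : Irreducible f)
    (hreg : ∃ x : Fin n → ℝ, eval x f = 0 ∧ ∃ i, eval x (pderiv i f) ≠ 0)
    (g : MvPolynomial (Fin n) ℝ)
    (hg : ∀ x : Fin n → ℝ, eval x f = 0 → eval x g = 0) :
    f ∣ g := by
  obtain ⟨x, hx0, i, hdi⟩ := hreg
  cases n with
  | zero => exact i.elim0
  | succ m =>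
    set e := Equiv.swap (0 : Fin (m+1)) i with he
    have hee : ∀ z : Fin (m+1) → ℝ, (z ∘ e) ∘ e = z := by
      intro z; funext j; simp [he, Function.comp, Equiv.swap_apply_self]
    have hirr' : Irreducible (rename (⇑e) f) :=
      (MulEquiv.irreducible_iff (f := (renameEquiv ℝ e).toRingEquiv.toMulEquiv)
        (x := f)).mpr hirr
    have hx0' : eval (x ∘ e) (rename (⇑e) f) = 0 := by
      rw [eval_rename, hee]; exact hx0
    have hpd : eval (x ∘ e) (pderiv 0 (rename (⇑e) f)) ≠ 0 := by
      have h0 : (0 : Fin (m+1)) = e i := by simp [he]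
      rw [h0, pderiv_rename e.injective, eval_rename, hee]
      exact hdi
    have hg' : ∀ z : Fin (m+1) → ℝ, eval z (rename (⇑e) f) = 0 →
        eval z (rename (⇑e) g) = 0 := by
      intro z hz
      rw [eval_rename] at hz ⊢
      exact hg _ hz
    have hdvd := key_lemma m (rename (⇑e) f) hirr' (x ∘ e) hx0' hpd (rename (⇑e) g) hg'
    exact (map_dvd_iff (f := (renameEquiv ℝ e).toRingEquiv.toMulEquiv)
      (a := f) (b := g)).mp (by exact hdvd)

end
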